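/- Suppose V ∈ B_s with s > n/2, and let C_0 be the doubling constant of the measure V(y)dy. Then for any N > log_2(C_0) + 1 there exists a constant C_N such that for all x ∈ R^n and r > 0, (1 + r m_V(x))^{-N} ∫_{B(x,r)} V(y) dy ≤ C_N r^{n-2}. -/

import Mathlib

open MeasureTheory Metric Set ENNReal
noncomputable section

/-- The dyadic annulus `E_k = B(x₀, 2^k r) \ B(x₀, 2^(k-1) r)`. -/
def Ann (n : ℕ) (x0 : EuclideanSpace ℝ (Fin n)) (r : ℝ) (k : ℤ) :
    Set (EuclideanSpace ℝ (Fin n)) :=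
  Metric.ball x0 ((2 : ℝ) ^ k * r) \ Metric.ball x0 ((2 : ℝ) ^ (k - 1) * r)

/-- The `L^p` norm of `f` on a set `s` (with exponent `p` a real number). -/
def lpOn (n : ℕ) (f : EuclideanSpace ℝ (Fin n) → ℝ) (p : ℝ)
    (s : Set (EuclideanSpace ℝ (Fin n))) : ℝ≥0∞ :=
  (∫⁻ x in s, (ENNReal.ofReal |f x|) ^ p) ^ (1 / p)

/-- The `L^p(ℝⁿ)` norm of `f`. -/
def lpNorm (n : ℕ) (f : EuclideanSpace ℝ (Fin n) → ℝ) (p : ℝ) : ℝ≥0∞ :=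
  lpOn n f p Set.univ

/-- The `q`-th power of the generalized Morrey norm `‖f‖_{L^{p,q,λ}_{α,θ,V}}`. -/
def morreyQ (n : ℕ) (mV : EuclideanSpace ℝ (Fin n) → ℝ) (p q lam alpha theta : ℝ)
    (f : EuclideanSpace ℝ (Fin n) → ℝ) : ℝ≥0∞ :=
  ⨆ (x0 : EuclideanSpace ℝ (Fin n)) (r : ℝ) (_ : 0 < r),
    ENNReal.ofReal ((1 + r * mV x0) ^ alpha * r ^ (-(lam * n))) *
      ∑' k : ℕ, (volume (Ann n x0 r (-(k : ℤ)))) ^ (theta * q) *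
        (lpOn n f p (Ann n x0 r (-(k : ℤ)))) ^ q

/-- The generalized Morrey norm. -/
def morreyNorm (n : ℕ) (mV : EuclideanSpace ℝ (Fin n) → ℝ) (p q lam alpha theta : ℝ)
    (f : EuclideanSpace ℝ (Fin n) → ℝ) : ℝ≥0∞ :=
  (morreyQ n mV p q lam alpha theta f) ^ (1 / q)

/-- `V` belongs to the reverse Hölder class `B_s`. -/
def ReverseHolder (n : ℕ) (V : EuclideanSpace ℝ (Fin n) → ℝ) (s : ℝ) : Prop :=
  ∃ C > (0 : ℝ), ∀ (x : EuclideanSpace ℝ (Fin n)) (r : ℝ), 0 < r →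
    ((volume (Metric.ball x r))⁻¹ *
        ∫⁻ y in Metric.ball x r, (ENNReal.ofReal (V y)) ^ s) ^ (1 / s) ≤
      ENNReal.ofReal C *
        ((volume (Metric.ball x r))⁻¹ * ∫⁻ y in Metric.ball x r, ENNReal.ofReal (V y))

/-- The auxiliary function `m_V` of Shen. -/
def auxm (n : ℕ) (V : EuclideanSpace ℝ (Fin n) → ℝ) (x : EuclideanSpace ℝ (Fin n)) : ℝ :=
  (sSup {r : ℝ | 0 < r ∧
      ∫⁻ y in Metric.ball x r, ENNReal.ofReal (V y) ≤ ENNReal.ofReal (r ^ ((n : ℝ) - 2))})⁻¹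

/-- The BMO seminorm of `b`. -/
def bmoNorm (n : ℕ) (b : EuclideanSpace ℝ (Fin n) → ℝ) : ℝ≥0∞ :=
  ⨆ (x : EuclideanSpace ℝ (Fin n)) (r : ℝ) (_ : 0 < r),
    (volume (Metric.ball x r))⁻¹ *
      ∫⁻ y in Metric.ball x r, ENNReal.ofReal |b y - ⨍ z in Metric.ball x r, b z|

/-- The fractional Hardy–Littlewood maximal function `M_{σ,γ}`. -/
def fracMax (n : ℕ) (sigma gam : ℝ) (f : EuclideanSpace ℝ (Fin n) → ℝ)
    (x : EuclideanSpace ℝ (Fin n)) : ℝ≥0∞ :=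
  ⨆ (z : EuclideanSpace ℝ (Fin n)) (ρ : ℝ) (_ : 0 < ρ) (_ : x ∈ Metric.ball z ρ),
    ((volume (Metric.ball z ρ)) ^ (-(1 - sigma * gam / n)) *
      ∫⁻ y in Metric.ball z ρ, (ENNReal.ofReal |f y|) ^ gam) ^ (1 / gam)

private lemma ptwise {w lam : ℝ≥0∞} {s : ℝ} (hs : 1 ≤ s) (hlam0 : lam ≠ 0) (hlamt : lam ≠ ⊤)
    (hw : w ≠ ⊤) : w ≤ lam + lam ^ (1 - s) * w ^ s := by
  rcases le_or_gt w lam with h | h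
  · exact le_trans h le_self_add
  · have hw0 : w ≠ 0 := by rintro rfl; simp at h
    have h1 : (1:ℝ≥0∞) ≤ lam ^ (1 - s) * w ^ (s - 1) := by
      calc (1:ℝ≥0∞) = lam ^ ((1 - s) + (s - 1)) := by norm_num
        _ = lam ^ (1 - s) * lam ^ (s - 1) := ENNReal.rpow_add _ _ hlam0 hlamt
        _ ≤ lam ^ (1 - s) * w ^ (s - 1) :=
            mul_le_mul_right (ENNReal.rpow_le_rpow h.le (by linarith)) _
    have h2 : w ^ (s - 1) * w = w ^ s := by
      nth_rewrite 2 [← ENNReal.rpow_one w]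
      rw [← ENNReal.rpow_add _ _ hw0 hw]; norm_num
    calc w = 1 * w := (one_mul w).symm
      _ ≤ (lam ^ (1 - s) * w ^ (s - 1)) * w := mul_le_mul_left h1 w
      _ = lam ^ (1 - s) * w ^ s := by rw [mul_assoc, h2]
      _ ≤ lam + lam ^ (1 - s) * w ^ s := le_add_self

private lemma key_real {n : ℕ} (hn : 3 ≤ n) {s C r ρ v1 : ℝ}
    (hs : (n : ℝ) / 2 < s) (hC : 0 < C) (hr : 0 < r) (hrρ : r ≤ ρ) (hv1 : 0 < v1) :
    (C * r ^ ((n:ℝ) - 2) / (r ^ (n:ℝ) * v1)) ^ (1 - s) *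
      ((ρ ^ (n:ℝ) * v1) * (C * ((ρ ^ (n:ℝ) * v1)⁻¹ * ρ ^ ((n:ℝ) - 2))) ^ s) ≤
      C * r ^ ((n:ℝ) - 2) := by
  have hρ : 0 < ρ := lt_of_lt_of_le hr hrρ
  have hn3 : (3:ℝ) ≤ (n:ℝ) := by exact_mod_cast hn
  have hX : (0:ℝ) < C * r ^ ((n:ℝ) - 2) / (r ^ (n:ℝ) * v1) := by positivity
  have hY : (0:ℝ) < C * ((ρ ^ (n:ℝ) * v1)⁻¹ * ρ ^ ((n:ℝ) - 2)) := by positivity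
  have hLHS : (0:ℝ) < (C * r ^ ((n:ℝ) - 2) / (r ^ (n:ℝ) * v1)) ^ (1 - s) *
      ((ρ ^ (n:ℝ) * v1) * (C * ((ρ ^ (n:ℝ) * v1)⁻¹ * ρ ^ ((n:ℝ) - 2))) ^ s) := by positivity
  have hRHS : (0:ℝ) < C * r ^ ((n:ℝ) - 2) := by positivity
  apply (Real.log_le_log_iff hLHS hRHS).mp
  have hlog : Real.log r ≤ Real.log ρ := Real.log_le_log hr hrρ
  have e0 : Real.log (r ^ (n:ℝ) * v1) = (n:ℝ) * Real.log r + Real.log v1 := by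
    rw [Real.log_mul (by positivity) (by positivity), Real.log_rpow hr]
  have e0' : Real.log (ρ ^ (n:ℝ) * v1) = (n:ℝ) * Real.log ρ + Real.log v1 := by
    rw [Real.log_mul (by positivity) (by positivity), Real.log_rpow hρ]
  have e1 : Real.log (C * r ^ ((n:ℝ) - 2) / (r ^ (n:ℝ) * v1)) =
      Real.log C + ((n:ℝ) - 2) * Real.log r - ((n:ℝ) * Real.log r + Real.log v1) := by
    rw [Real.log_div (by positivity) (by positivity),
      Real.log_mul (by positivity) (by positivity), Real.log_rpow hr, e0]
  have e2 : Real.log (C * ((ρ ^ (n:ℝ) * v1)⁻¹ * ρ ^ ((n:ℝ) - 2))) =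
      Real.log C + (-((n:ℝ) * Real.log ρ + Real.log v1) + ((n:ℝ) - 2) * Real.log ρ) := by
    rw [Real.log_mul (by positivity) (by positivity),
      Real.log_mul (by positivity) (by positivity), Real.log_inv, e0', Real.log_rpow hρ]
  rw [Real.log_mul (by positivity) (by positivity), Real.log_rpow hX, e1,
    Real.log_mul (by positivity) (by positivity), Real.log_rpow hY, e2, e0',
    Real.log_mul (by positivity) (by positivity), Real.log_rpow hr]
  nlinarith [mul_nonneg (by linarith : (0:ℝ) ≤ 2 * s - (n:ℝ))
    (by linarith : (0:ℝ) ≤ Real.log ρ - Real.log r)]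


set_option maxHeartbeats 3200000 in
/-- Guo–Li–Peng's Lemma 2.3: decay estimate for the `V`-measure of balls
in terms of the auxiliary function `m_V`. -/
theorem auxm_ball_measure_bound (n : ℕ) (hn : 3 ≤ n)
    (V : EuclideanSpace ℝ (Fin n) → ℝ) (hV : ∀ x, 0 ≤ V x)
    (s : ℝ) (hs : (n : ℝ) / 2 < s)
    (hRH : ReverseHolder n V s)
    (hm : ∀ x, 0 < auxm n V x)
    (C0 : ℝ) (hC0 : 0 < C0)
    (hdouble : ∀ (x : EuclideanSpace ℝ (Fin n)) (r : ℝ), 0 < r →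
      ∫⁻ y in Metric.ball x (2 * r), ENNReal.ofReal (V y) ≤
        ENNReal.ofReal C0 * ∫⁻ y in Metric.ball x r, ENNReal.ofReal (V y)) :
    ∀ N : ℝ, N > Real.logb 2 C0 + 1 →
      ∃ CN > (0 : ℝ), ∀ (x : EuclideanSpace ℝ (Fin n)) (r : ℝ), 0 < r →
        ENNReal.ofReal ((1 + r * auxm n V x) ^ (-N)) *
            ∫⁻ y in Metric.ball x r, ENNReal.ofReal (V y) ≤
          ENNReal.ofReal (CN * r ^ ((n : ℝ) - 2)) := by
  intro N hN
  obtain ⟨C, hC, hRHC⟩ := hRH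
  have hn3 : (3:ℝ) ≤ (n:ℝ) := by exact_mod_cast hn
  have hs1 : 1 ≤ s := by linarith
  have hs0 : 0 < s := by linarith
  by_cases hC01 : C0 < 1
  · -- degenerate case: all ball integrals vanish
    refine ⟨1, one_pos, ?_⟩
    intro x r hr
    set S : Set ℝ := {t : ℝ | 0 < t ∧
      ∫⁻ y in Metric.ball x t, ENNReal.ofReal (V y) ≤ ENNReal.ofReal (t ^ ((n : ℝ) - 2))}
      with hSdef
    have hmdef : auxm n V x = (sSup S)⁻¹ := rfl
    have hmx := hm x
    rw [hmdef] at hmx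
    have hR : 0 < sSup S := inv_pos.mp hmx
    have hne : S.Nonempty := by
      by_contra h
      rw [Set.not_nonempty_iff_eq_empty] at h
      rw [h, Real.sSup_empty] at hR
      exact lt_irrefl 0 hR
    obtain ⟨ρ, hρpos, hρint⟩ := hne
    have hfin : (∫⁻ y in Metric.ball x ρ, ENNReal.ofReal (V y)) ≠ ⊤ :=
      (lt_of_le_of_lt hρint ENNReal.ofReal_lt_top).ne
    have hzero : (∫⁻ y in Metric.ball x ρ, ENNReal.ofReal (V y)) = 0 := by
      by_contra hne0
      have h1 : (∫⁻ y in Metric.ball x ρ, ENNReal.ofReal (V y)) ≤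
          ENNReal.ofReal C0 * ∫⁻ y in Metric.ball x ρ, ENNReal.ofReal (V y) :=
        le_trans (lintegral_mono_set (ball_subset_ball (by linarith))) (hdouble x ρ hρpos)
      have h2 : ENNReal.ofReal C0 * (∫⁻ y in Metric.ball x ρ, ENNReal.ofReal (V y)) <
          1 * ∫⁻ y in Metric.ball x ρ, ENNReal.ofReal (V y) :=
        ENNReal.mul_lt_mul_left hne0 hfin (ENNReal.ofReal_lt_one.mpr hC01)
      rw [one_mul] at h2
      exact absurd h1 (not_le.mpr h2)
    have hiter : ∀ k : ℕ, (∫⁻ y in Metric.ball x ((2:ℝ)^k * ρ), ENNReal.ofReal (V y)) = 0 := by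
      intro k
      induction k with
      | zero => simpa using hzero
      | succ k ih =>
        have h2 : (2:ℝ)^(k+1) * ρ = 2 * ((2:ℝ)^k * ρ) := by ring
        rw [h2]
        refine le_antisymm ?_ zero_le
        calc (∫⁻ y in Metric.ball x (2 * ((2:ℝ)^k * ρ)), ENNReal.ofReal (V y)) ≤
            ENNReal.ofReal C0 * ∫⁻ y in Metric.ball x ((2:ℝ)^k * ρ), ENNReal.ofReal (V y) :=
              hdouble x _ (by positivity)
          _ = 0 := by rw [ih, mul_zero]
    obtain ⟨k, hk⟩ := pow_unbounded_of_one_lt (r/ρ) (one_lt_two (α := ℝ))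
    have hrk : r ≤ (2:ℝ)^k * ρ := by
      rw [div_lt_iff₀ hρpos] at hk
      linarith
    have hμ0 : (∫⁻ y in Metric.ball x r, ENNReal.ofReal (V y)) = 0 :=
      le_antisymm (le_trans (lintegral_mono_set (ball_subset_ball hrk)) (hiter k).le) zero_le
    rw [hμ0, mul_zero]
    exact zero_le
  · -- main case : C0 ≥ 1
    push_neg at hC01
    set α := Real.logb 2 C0 with hα
    have hα0 : 0 ≤ α := Real.logb_nonneg one_lt_two hC01
    have hN1 : 1 < N := by linarith
    refine ⟨max (2*C) (2 ^ (N + α)), lt_max_of_lt_left (by positivity), ?_⟩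
    intro x r hr
    set CN := max (2*C) ((2:ℝ) ^ (N + α)) with hCN
    set S : Set ℝ := {t : ℝ | 0 < t ∧
      ∫⁻ y in Metric.ball x t, ENNReal.ofReal (V y) ≤ ENNReal.ofReal (t ^ ((n : ℝ) - 2))}
      with hSdef
    have hmdef : auxm n V x = (sSup S)⁻¹ := rfl
    have hmx := hm x
    rw [hmdef] at hmx
    have hR : 0 < sSup S := inv_pos.mp hmx
    have hne : S.Nonempty := by
      by_contra h
      rw [Set.not_nonempty_iff_eq_empty] at h
      rw [h, Real.sSup_empty] at hR
      exact lt_irrefl 0 hR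
    have hbdd : BddAbove S := by
      by_contra h
      rw [Real.sSup_of_not_bddAbove h] at hR
      exact lt_irrefl 0 hR
    obtain ⟨ρ, hρS, hρhalf⟩ := exists_lt_of_lt_csSup hne (by linarith : sSup S / 2 < sSup S)
    have hρR : ρ ≤ sSup S := le_csSup hbdd hρS
    obtain ⟨hρpos, hρint⟩ := hρS
    have hrm0 : 0 ≤ r * auxm n V x := mul_nonneg hr.le (hm x).le
    haveI : Nontrivial (EuclideanSpace ℝ (Fin n)) :=
      Module.nontrivial_of_finrank_pos (R := ℝ)
        (by rw [finrank_euclideanSpace_fin]; omega)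
    set v1 : ℝ := (volume (Metric.ball (0 : EuclideanSpace ℝ (Fin n)) 1)).toReal with hv1def
    have hv1 : 0 < v1 :=
      ENNReal.toReal_pos (measure_ball_pos volume _ one_pos).ne' measure_ball_lt_top.ne
    have hball : ∀ t : ℝ, 0 < t →
        volume (Metric.ball x t) = ENNReal.ofReal (t ^ (n:ℝ) * v1) := by
      intro t ht
      rw [Measure.addHaar_ball volume x ht.le, finrank_euclideanSpace_fin,
        ← ENNReal.ofReal_toReal (measure_ball_lt_top (x := (0 : EuclideanSpace ℝ (Fin n)))
          (r := 1)).ne, ← hv1def, ← ENNReal.ofReal_mul (by positivity),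
        ← Real.rpow_natCast t n]
    rcases le_or_gt r ρ with hcase | hcase
    · -- CASE A : r ≤ ρ
      set a : ℝ := (n:ℝ) - 2 with hadef
      set L : ℝ := C * r ^ a / (r ^ (n:ℝ) * v1) with hLdef
      have hL : 0 < L := by positivity
      have hlamt : ENNReal.ofReal L ≠ ⊤ := ENNReal.ofReal_ne_top
      have hlam0 : ENNReal.ofReal L ≠ 0 := by
        simp [ENNReal.ofReal_eq_zero, not_le, hL]
      have step1 : (∫⁻ y in Metric.ball x r, ENNReal.ofReal (V y)) ≤
          ENNReal.ofReal (L * (r ^ (n:ℝ) * v1)) +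
          ENNReal.ofReal (L ^ (1 - s)) *
            ∫⁻ y in Metric.ball x r, (ENNReal.ofReal (V y)) ^ s := by
        have h1 : (∫⁻ y in Metric.ball x r, ENNReal.ofReal (V y)) ≤
            ∫⁻ y in Metric.ball x r,
              (ENNReal.ofReal L + ENNReal.ofReal L ^ (1-s) * (ENNReal.ofReal (V y)) ^ s) :=
          lintegral_mono fun y => ptwise hs1 hlam0 hlamt ENNReal.ofReal_ne_top
        rw [lintegral_add_left measurable_const, setLIntegral_const,
          lintegral_const_mul' _ _
            (by rw [ENNReal.ofReal_rpow_of_pos hL]; exact ENNReal.ofReal_ne_top)] at h1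
        rwa [hball r hr, ← ENNReal.ofReal_mul hL.le, ENNReal.ofReal_rpow_of_pos hL] at h1
      have hVol0 : volume (Metric.ball x ρ) ≠ 0 := (measure_ball_pos volume x hρpos).ne'
      have hVolt : volume (Metric.ball x ρ) ≠ ⊤ := measure_ball_lt_top.ne
      have t1 : (volume (Metric.ball x ρ))⁻¹ *
            ∫⁻ y in Metric.ball x ρ, (ENNReal.ofReal (V y)) ^ s ≤
          (ENNReal.ofReal C * ((volume (Metric.ball x ρ))⁻¹ *
            ∫⁻ y in Metric.ball x ρ, ENNReal.ofReal (V y))) ^ s := by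
        have h := ENNReal.rpow_le_rpow (hRHC x ρ hρpos) hs0.le
        rwa [← ENNReal.rpow_mul, one_div, inv_mul_cancel₀ (ne_of_gt hs0),
          ENNReal.rpow_one] at h
      have t2 : (∫⁻ y in Metric.ball x ρ, (ENNReal.ofReal (V y)) ^ s) ≤
          volume (Metric.ball x ρ) * (ENNReal.ofReal C * ((volume (Metric.ball x ρ))⁻¹ *
            ∫⁻ y in Metric.ball x ρ, ENNReal.ofReal (V y))) ^ s := by
        calc (∫⁻ y in Metric.ball x ρ, (ENNReal.ofReal (V y)) ^ s)
            = volume (Metric.ball x ρ) * ((volume (Metric.ball x ρ))⁻¹ *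
              ∫⁻ y in Metric.ball x ρ, (ENNReal.ofReal (V y)) ^ s) := by
              rw [← mul_assoc, ENNReal.mul_inv_cancel hVol0 hVolt, one_mul]
          _ ≤ _ := mul_le_mul_right t1 _
      have t3 : ENNReal.ofReal C * ((volume (Metric.ball x ρ))⁻¹ *
            ∫⁻ y in Metric.ball x ρ, ENNReal.ofReal (V y)) ≤
          ENNReal.ofReal (C * ((ρ ^ (n:ℝ) * v1)⁻¹ * ρ ^ a)) := by
        rw [hball ρ hρpos, ← ENNReal.ofReal_inv_of_pos (by positivity)]
        calc ENNReal.ofReal C * (ENNReal.ofReal (ρ ^ (n:ℝ) * v1)⁻¹ *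
              ∫⁻ y in Metric.ball x ρ, ENNReal.ofReal (V y))
            ≤ ENNReal.ofReal C * (ENNReal.ofReal (ρ ^ (n:ℝ) * v1)⁻¹ *
              ENNReal.ofReal (ρ ^ a)) :=
              mul_le_mul_right (mul_le_mul_right hρint _) _
          _ = ENNReal.ofReal (C * ((ρ ^ (n:ℝ) * v1)⁻¹ * ρ ^ a)) := by
              rw [← ENNReal.ofReal_mul (by positivity), ← ENNReal.ofReal_mul hC.le]
      have t4 : (∫⁻ y in Metric.ball x r, (ENNReal.ofReal (V y)) ^ s) ≤
          ENNReal.ofReal ((ρ ^ (n:ℝ) * v1) * (C * ((ρ ^ (n:ℝ) * v1)⁻¹ * ρ ^ a)) ^ s) := by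
        calc (∫⁻ y in Metric.ball x r, (ENNReal.ofReal (V y)) ^ s)
            ≤ (∫⁻ y in Metric.ball x ρ, (ENNReal.ofReal (V y)) ^ s) :=
              lintegral_mono_set (ball_subset_ball hcase)
          _ ≤ volume (Metric.ball x ρ) * (ENNReal.ofReal C * ((volume (Metric.ball x ρ))⁻¹ *
              ∫⁻ y in Metric.ball x ρ, ENNReal.ofReal (V y))) ^ s := t2
          _ ≤ ENNReal.ofReal (ρ ^ (n:ℝ) * v1) *
              ENNReal.ofReal ((C * ((ρ ^ (n:ℝ) * v1)⁻¹ * ρ ^ a)) ^ s) := by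
              rw [hball ρ hρpos]
              refine mul_le_mul_right ?_ _
              rw [← ENNReal.ofReal_rpow_of_pos (by positivity)]
              exact ENNReal.rpow_le_rpow (by rw [← hball ρ hρpos]; exact t3) hs0.le
          _ = ENNReal.ofReal ((ρ ^ (n:ℝ) * v1) * (C * ((ρ ^ (n:ℝ) * v1)⁻¹ * ρ ^ a)) ^ s) :=
              (ENNReal.ofReal_mul (by positivity)).symm
      have hmain : (∫⁻ y in Metric.ball x r, ENNReal.ofReal (V y)) ≤
          ENNReal.ofReal (2 * C * r ^ a) := by
        calc (∫⁻ y in Metric.ball x r, ENNReal.ofReal (V y))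
            ≤ ENNReal.ofReal (L * (r ^ (n:ℝ) * v1)) + ENNReal.ofReal (L ^ (1 - s)) *
              ∫⁻ y in Metric.ball x r, (ENNReal.ofReal (V y)) ^ s := step1
          _ ≤ ENNReal.ofReal (L * (r ^ (n:ℝ) * v1)) + ENNReal.ofReal (L ^ (1 - s)) *
              ENNReal.ofReal ((ρ ^ (n:ℝ) * v1) * (C * ((ρ ^ (n:ℝ) * v1)⁻¹ * ρ ^ a)) ^ s) :=
              add_le_add_right (mul_le_mul_right t4 _) _
          _ = ENNReal.ofReal (L * (r ^ (n:ℝ) * v1) +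
              L ^ (1 - s) * ((ρ ^ (n:ℝ) * v1) * (C * ((ρ ^ (n:ℝ) * v1)⁻¹ * ρ ^ a)) ^ s)) := by
              rw [← ENNReal.ofReal_mul (by positivity),
                ← ENNReal.ofReal_add (by positivity) (by positivity)]
          _ ≤ ENNReal.ofReal (C * r ^ a + C * r ^ a) := by
              apply ENNReal.ofReal_le_ofReal
              have h1 : L * (r ^ (n:ℝ) * v1) = C * r ^ a := by
                rw [hLdef]; field_simp
              have h2 : L ^ (1 - s) *
                  ((ρ ^ (n:ℝ) * v1) * (C * ((ρ ^ (n:ℝ) * v1)⁻¹ * ρ ^ a)) ^ s) ≤ C * r ^ a := by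
                rw [hLdef, hadef]
                exact key_real hn hs hC hr hcase hv1
              linarith
          _ = ENNReal.ofReal (2 * C * r ^ a) := by ring_nf
      calc ENNReal.ofReal ((1 + r * auxm n V x) ^ (-N)) *
            ∫⁻ y in Metric.ball x r, ENNReal.ofReal (V y)
          ≤ 1 * ENNReal.ofReal (2 * C * r ^ a) :=
            mul_le_mul' (ENNReal.ofReal_le_one.mpr
              (Real.rpow_le_one_of_one_le_of_nonpos (by linarith) (by linarith))) hmain
        _ = ENNReal.ofReal (2 * C * r ^ a) := one_mul _
        _ ≤ ENNReal.ofReal (CN * r ^ a) := ENNReal.ofReal_le_ofReal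
            (mul_le_mul_of_nonneg_right (le_max_left _ _) (by positivity))
    · -- CASE B : ρ < r
      have hex : ∃ k : ℕ, r ≤ 2^k * ρ := by
        obtain ⟨k, hk⟩ := pow_unbounded_of_one_lt (r/ρ) (one_lt_two (α := ℝ))
        refine ⟨k, ?_⟩
        rw [div_lt_iff₀ hρpos] at hk
        linarith
      have hj0 : Nat.find hex ≠ 0 := by
        intro h
        have h2 := Nat.find_spec hex
        rw [h] at h2
        simp at h2
        linarith
      obtain ⟨i, hi⟩ := Nat.exists_eq_succ_of_ne_zero hj0
      have hjspec : r ≤ 2^(i+1) * ρ := by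
        have := Nat.find_spec hex; rwa [hi] at this
      have hjmin : (2:ℝ)^i * ρ < r := by
        have h := Nat.find_min hex (by omega : i < Nat.find hex)
        push_neg at h
        exact h
      have hiter : ∀ k : ℕ, (∫⁻ y in Metric.ball x ((2:ℝ)^k * ρ), ENNReal.ofReal (V y)) ≤
          (ENNReal.ofReal C0)^k * ∫⁻ y in Metric.ball x ρ, ENNReal.ofReal (V y) := by
        intro k
        induction k with
        | zero => simp
        | succ k ih =>
          have h2 : (2:ℝ)^(k+1) * ρ = 2 * ((2:ℝ)^k * ρ) := by ring
          rw [h2]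
          calc (∫⁻ y in Metric.ball x (2 * ((2:ℝ)^k * ρ)), ENNReal.ofReal (V y))
              ≤ ENNReal.ofReal C0 *
                ∫⁻ y in Metric.ball x ((2:ℝ)^k * ρ), ENNReal.ofReal (V y) :=
                hdouble x _ (by positivity)
            _ ≤ ENNReal.ofReal C0 * ((ENNReal.ofReal C0)^k *
                ∫⁻ y in Metric.ball x ρ, ENNReal.ofReal (V y)) := mul_le_mul_right ih _
            _ = (ENNReal.ofReal C0)^(k+1) *
                ∫⁻ y in Metric.ball x ρ, ENNReal.ofReal (V y) := by
                rw [pow_succ]; ring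
      have hμ : (∫⁻ y in Metric.ball x r, ENNReal.ofReal (V y)) ≤
          ENNReal.ofReal (C0^(i+1) * ρ^((n:ℝ)-2)) := by
        calc (∫⁻ y in Metric.ball x r, ENNReal.ofReal (V y))
            ≤ ∫⁻ y in Metric.ball x ((2:ℝ)^(i+1) * ρ), ENNReal.ofReal (V y) :=
              lintegral_mono_set (ball_subset_ball hjspec)
          _ ≤ (ENNReal.ofReal C0)^(i+1) *
              ∫⁻ y in Metric.ball x ρ, ENNReal.ofReal (V y) := hiter (i+1)
          _ ≤ (ENNReal.ofReal C0)^(i+1) * ENNReal.ofReal (ρ^((n:ℝ)-2)) :=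
              mul_le_mul_right hρint _
          _ = ENNReal.ofReal (C0^(i+1) * ρ^((n:ℝ)-2)) := by
              rw [← ENNReal.ofReal_pow hC0.le, ← ENNReal.ofReal_mul (by positivity)]
      have hrm : (2:ℝ)^((i:ℝ) - 1) < r * (sSup S)⁻¹ := by
        have ha1 : (2:ℝ)^((i:ℝ)-1) = (2:ℝ)^(i:ℕ) / 2 := by
          rw [Real.rpow_sub two_pos, Real.rpow_one, Real.rpow_natCast]
        have ha2 : (2:ℝ)^(i:ℕ)/2 < r / (2*ρ) := by
          rw [div_lt_div_iff₀ (by norm_num) (by positivity)]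
          nlinarith [hjmin]
        have ha3 : r / (2*ρ) ≤ r * (sSup S)⁻¹ := by
          rw [div_eq_mul_inv]
          exact mul_le_mul_of_nonneg_left (inv_anti₀ hR (by linarith)) hr.le
        linarith
      have hbase : (0:ℝ) < 1 + r * (sSup S)⁻¹ := by
        have := mul_nonneg hr.le (inv_nonneg.mpr hR.le)
        linarith
      have hpowN : (2:ℝ)^(((i:ℝ)-1)*N) ≤ (1 + r * (sSup S)⁻¹)^N := by
        rw [Real.rpow_mul (by norm_num : (0:ℝ) ≤ 2)]
        refine Real.rpow_le_rpow (by positivity) ?_ (by linarith)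
        have := mul_nonneg hr.le (inv_nonneg.mpr hR.le)
        linarith
      have hC0j : C0^(i+1) ≤ (2:ℝ)^(N+α) * (2:ℝ)^(((i:ℝ)-1)*N) := by
        have h2a : (2:ℝ)^α = C0 := Real.rpow_logb two_pos (by norm_num) hC0
        have e1 : (C0:ℝ)^(i+1) = (2:ℝ)^(α*((i:ℝ)+1)) := by
          rw [Real.rpow_mul (by norm_num : (0:ℝ) ≤ 2), h2a, ← Real.rpow_natCast C0 (i+1)]
          push_cast
          rfl
        have e2 : (2:ℝ)^(N+α) * (2:ℝ)^(((i:ℝ)-1)*N) = (2:ℝ)^(N+α+((i:ℝ)-1)*N) :=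
          (Real.rpow_add two_pos _ _).symm
        rw [e1, e2]
        apply Real.rpow_le_rpow_of_exponent_le one_le_two
        nlinarith [mul_nonneg (Nat.cast_nonneg (α := ℝ) i) (by linarith : (0:ℝ) ≤ N - α)]
      have hreal : (1 + r * (sSup S)⁻¹)^(-N) * (C0^(i+1) * ρ^((n:ℝ)-2)) ≤
          CN * r^((n:ℝ)-2) := by
        rw [Real.rpow_neg hbase.le,
          inv_mul_le_iff₀ (Real.rpow_pos_of_pos hbase N)]
        calc C0^(i+1) * ρ^((n:ℝ)-2)
            ≤ ((2:ℝ)^(N+α) * (2:ℝ)^(((i:ℝ)-1)*N)) * r^((n:ℝ)-2) :=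
              mul_le_mul hC0j (Real.rpow_le_rpow hρpos.le hcase.le (by linarith))
                (by positivity) (by positivity)
          _ ≤ (CN * (1 + r*(sSup S)⁻¹)^N) * r^((n:ℝ)-2) := by
              refine mul_le_mul_of_nonneg_right ?_ (by positivity)
              exact mul_le_mul (le_max_right _ _) hpowN (by positivity)
                (le_trans (by positivity) (le_max_right (2*C) _))
          _ = (1 + r*(sSup S)⁻¹)^N * (CN * r^((n:ℝ)-2)) := by ring
      calc ENNReal.ofReal ((1 + r * auxm n V x) ^ (-N)) *
            ∫⁻ y in Metric.ball x r, ENNReal.ofReal (V y)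
          ≤ ENNReal.ofReal ((1 + r * auxm n V x) ^ (-N)) *
            ENNReal.ofReal (C0^(i+1) * ρ^((n:ℝ)-2)) := mul_le_mul_right hμ _
        _ = ENNReal.ofReal ((1 + r * (sSup S)⁻¹) ^ (-N) * (C0^(i+1) * ρ^((n:ℝ)-2))) := by
            rw [hmdef, ← ENNReal.ofReal_mul (by positivity)]
        _ ≤ ENNReal.ofReal (CN * r^((n:ℝ)-2)) := ENNReal.ofReal_le_ofReal hreal
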